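/- The Hermite functions ψ_k(x) = h_k(x)·exp(−x²/2), where h_k are the orthonormalized Hermite polynomials defined by the three-term recurrence h_k(x) = √(2/k)·x·h_{k−1}(x) − √((k−1)/k)·h_{k−2}(x) with h₀(x) = π^{−1/4} and h₁(x) = √2·π^{−1/4}·x, form an orthonormal system in L²(ℝ) with respect to Lebesgue measure: ∫_ℝ ψ_j(x) ψ_k(x) dx = δ_{jk}. -/

import Mathlib

open MeasureTheory

/-- The orthonormalized Hermite polynomials, defined by the three-term recurrence
`h_k(x) = √(2/k)·x·h_{k−1}(x) − √((k−1)/k)·h_{k−2}(x)`,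
`h₀(x) = π^{−1/4}`, `h₁(x) = √2·π^{−1/4}·x`. -/
noncomputable def hermiteH : ℕ → ℝ → ℝ
  | 0, _ => Real.pi ^ (-(1 : ℝ) / 4)
  | 1, x => Real.sqrt 2 * Real.pi ^ (-(1 : ℝ) / 4) * x
  | (k + 2), x =>
      Real.sqrt (2 / ((k : ℝ) + 2)) * x * hermiteH (k + 1) x
        - Real.sqrt (((k : ℝ) + 1) / ((k : ℝ) + 2)) * hermiteH k x

/-- The Hermite function `ψ_k(x) = h_k(x)·exp(−x²/2)`. -/
noncomputable def hermitePsi (k : ℕ) (x : ℝ) : ℝ :=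
  hermiteH k x * Real.exp (-x ^ 2 / 2)

namespace HermiteAux

open Polynomial Real Nat

noncomputable def gau (x : ℝ) : ℝ := Real.exp (-(x ^ 2 / 2))

lemma intPolyGau (P : ℝ[X]) : Integrable fun x : ℝ => P.eval x * gau x := by
  have hpow : ∀ n : ℕ, Integrable fun x : ℝ => x ^ n * gau x := by
    intro n
    have h := integrable_rpow_mul_exp_neg_mul_sq (b := 1/2) (by norm_num)
      (s := (n : ℝ)) (lt_of_lt_of_le neg_one_lt_zero (Nat.cast_nonneg n))
    simp_rw [Real.rpow_natCast,
      show ∀ x : ℝ, -(1/2 : ℝ) * x ^ 2 = -(x ^ 2 / 2) from fun x => by ring] at h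
    exact h
  have : (fun x : ℝ => P.eval x * gau x)
      = fun x => ∑ i ∈ Finset.range (P.natDegree + 1), P.coeff i * (x ^ i * gau x) := by
    funext x
    rw [Polynomial.eval_eq_sum_range, Finset.sum_mul]
    simp [mul_assoc]
  rw [this]
  exact integrable_finset_sum _ fun i _ => (hpow i).const_mul _

lemma derivative_hermite_succ (n : ℕ) :
    derivative (hermite (n + 1)) = (n + 1) • hermite n := by
  induction n with
  | zero => simp [hermite_one]
  | succ n ih =>
      rw [hermite_succ (n + 1)]
      rw [derivative_sub, derivative_mul, derivative_X, one_mul, ih]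
      rw [derivative_smul]
      rw [mul_smul_comm, add_sub_assoc, ← smul_sub, ← hermite_succ, succ_nsmul]
      module

lemma hermite_succ_succ (n : ℕ) :
    hermite (n + 2) = X * hermite (n + 1) - (n + 1) • hermite n := by
  rw [hermite_succ, derivative_hermite_succ]

lemma derivIter_gau (k : ℕ) :
    deriv^[k] gau = fun x => (-1 : ℝ) ^ k * aeval x (hermite k) * gau x :=
  funext fun x => Polynomial.deriv_gaussian_eq_hermite_mul_gaussian k x

lemma aeval_eq_eval_map (p : ℤ[X]) (x : ℝ) :
    aeval x p = (p.map (Int.castRingHom ℝ)).eval x := by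
  rw [aeval_def, eval_map]; rfl

lemma intPolyDeriv (P : ℝ[X]) (k : ℕ) :
    Integrable fun x : ℝ => P.eval x * deriv^[k] gau x := by
  rw [derivIter_gau]
  have : (fun x : ℝ => P.eval x * ((-1 : ℝ) ^ k * aeval x (hermite k) * gau x))
      = fun x => (C ((-1 : ℝ) ^ k) * P * (hermite k).map (Int.castRingHom ℝ)).eval x * gau x := by
    funext x
    rw [aeval_eq_eval_map]
    simp only [eval_mul, eval_C]
    ring
  rw [this]
  exact intPolyGau _

lemma hasDerivAt_derivIter_gau (k : ℕ) (x : ℝ) :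
    HasDerivAt (deriv^[k] gau) (deriv^[k + 1] gau x) x := by
  have hdiff : Differentiable ℝ (deriv^[k] gau) := by
    rw [derivIter_gau]
    exact ((Polynomial.differentiable_aeval (hermite k)).const_mul _).mul
      (((differentiable_id.pow 2).div_const 2).neg.exp)
  rw [Function.iterate_succ_apply']
  exact (hdiff x).hasDerivAt

lemma ibp_step (P : ℝ[X]) (k : ℕ) :
    ∫ x : ℝ, P.eval x * deriv^[k + 1] gau x
      = - ∫ x : ℝ, (derivative P).eval x * deriv^[k] gau x := by
  exact integral_mul_deriv_eq_deriv_mul_of_integrable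
    (fun x _ => P.hasDerivAt x) (fun x _ => hasDerivAt_derivIter_gau k x)
    (intPolyDeriv P (k + 1)) (intPolyDeriv (derivative P) k) (intPolyDeriv P k)

lemma ibp_iter (P : ℝ[X]) (k : ℕ) :
    ∫ x : ℝ, P.eval x * deriv^[k] gau x
      = (-1 : ℝ) ^ k * ∫ x : ℝ, (derivative^[k] P).eval x * gau x := by
  induction k generalizing P with
  | zero => simp
  | succ k ih =>
      rw [ibp_step P k, ih (derivative P), ← Function.iterate_succ_apply]
      ring

lemma integral_gau : ∫ x : ℝ, gau x = Real.sqrt (2 * π) := by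
  have h := integral_gaussian (1/2)
  simp_rw [show ∀ x : ℝ, -(1/2 : ℝ) * x ^ 2 = -(x ^ 2 / 2) from fun x => by ring] at h
  rw [show π / (1/2 : ℝ) = 2 * π by ring] at h
  exact h

lemma natDegree_hmap (j : ℕ) :
    ((hermite j).map (Int.castRingHom ℝ)).natDegree = j := by
  rw [(hermite_monic j).natDegree_map, natDegree_hermite]

lemma ortho_key (j k : ℕ) (h : j ≤ k) :
    ∫ x : ℝ, aeval x (hermite j) * aeval x (hermite k) * gau x
      = if j = k then (j ! : ℝ) * Real.sqrt (2 * π) else 0 := by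
  set P : ℝ[X] := (hermite j).map (Int.castRingHom ℝ) with hP
  have step1 : ∫ x : ℝ, aeval x (hermite j) * aeval x (hermite k) * gau x
      = ∫ x : ℝ, (derivative^[k] P).eval x * gau x := by
    have h1 : ∀ x : ℝ, aeval x (hermite j) * aeval x (hermite k) * gau x
        = (-1 : ℝ) ^ k * (P.eval x * deriv^[k] gau x) := by
      intro x
      rw [derivIter_gau, aeval_eq_eval_map, ← hP]
      have h2 : ((-1 : ℝ)) ^ (k * 2) = 1 := Even.neg_one_pow ⟨k, by ring⟩
      simp only []
      linear_combination (-(P.eval x * aeval x (hermite k) * gau x)) * h2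
    simp_rw [h1]
    rw [integral_const_mul, ibp_iter, ← mul_assoc, ← mul_pow]
    norm_num
  rw [step1]
  rcases lt_or_eq_of_le h with hlt | heq
  · have hz : derivative^[k] P = 0 :=
      iterate_derivative_eq_zero (by rw [natDegree_hmap]; exact hlt)
    rw [hz, if_neg hlt.ne]
    simp
  · subst heq
    have hdeg : (derivative^[j] P).natDegree = 0 := by
      have h1 := natDegree_iterate_derivative P j
      rw [natDegree_hmap] at h1
      omega
    have hCeq : derivative^[j] P = C ((j ! : ℝ)) := by
      rw [(derivative^[j] P).eq_C_of_natDegree_le_zero hdeg.le]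
      congr 1
      rw [coeff_iterate_derivative, zero_add, hP, coeff_map, coeff_hermite_self]
      simp [Nat.descFactorial_self]
    rw [hCeq, if_pos rfl]
    simp_rw [eval_C]
    rw [integral_const_mul, integral_gau]

lemma ortho (j k : ℕ) :
    ∫ x : ℝ, aeval x (hermite j) * aeval x (hermite k) * gau x
      = if j = k then (j ! : ℝ) * Real.sqrt (2 * π) else 0 := by
  rcases le_total j k with h | h
  · exact ortho_key j k h
  · have hcomm : ∀ x : ℝ, aeval x (hermite j) * aeval x (hermite k) * gau x
        = aeval x (hermite k) * aeval x (hermite j) * gau x := fun x => by ring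
    simp_rw [hcomm]
    rw [ortho_key k j h]
    by_cases hjk : j = k
    · subst hjk; simp
    · simp [hjk, Ne.symm hjk]

noncomputable def hC (k : ℕ) : ℝ := Real.pi ^ (-(1 : ℝ) / 4) * (Real.sqrt (k !))⁻¹

lemma sqrt_fact_succ (k : ℕ) :
    Real.sqrt ((k + 1)! : ℝ) = Real.sqrt ((k : ℝ) + 1) * Real.sqrt (k ! : ℝ) := by
  rw [← Real.sqrt_mul (by positivity)]
  congr 1
  push_cast [Nat.factorial_succ]
  ring

lemma coef1 (k : ℕ) :
    Real.sqrt (2 / ((k : ℝ) + 2)) * hC (k + 1) = Real.sqrt 2 * hC (k + 2) := by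
  rw [Real.sqrt_div (by norm_num), hC, hC,
    show ((k : ℕ) + 2)! = ((k + 1) + 1)! by norm_num, sqrt_fact_succ (k + 1),
    show (((k : ℕ) + 1 : ℕ) : ℝ) + 1 = (k : ℝ) + 2 by push_cast; ring]
  rw [mul_inv]
  ring

lemma coef2 (k : ℕ) :
    Real.sqrt (((k : ℝ) + 1) / ((k : ℝ) + 2)) * hC k = ((k : ℝ) + 1) * hC (k + 2) := by
  have h1 : Real.sqrt ((k : ℝ) + 1) * Real.sqrt ((k : ℝ) + 1) = (k : ℝ) + 1 :=
    Real.mul_self_sqrt (by positivity)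
  have hb : Real.sqrt ((k : ℝ) + 2) ≠ 0 := by positivity
  have ha : Real.sqrt ((k : ℝ) + 1) ≠ 0 := by positivity
  have hf : Real.sqrt (k ! : ℝ) ≠ 0 := by positivity
  rw [Real.sqrt_div (by positivity), hC, hC,
    show ((k : ℕ) + 2)! = ((k + 1) + 1)! by norm_num, sqrt_fact_succ (k + 1),
    sqrt_fact_succ k,
    show (((k : ℕ) + 1 : ℕ) : ℝ) + 1 = (k : ℝ) + 2 by push_cast; ring]
  field_simp
  linear_combination h1

end HermiteAux

namespace HermiteAux

open Polynomial Real Nat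

lemma hermiteH_eq : ∀ (k : ℕ) (x : ℝ),
    hermiteH k x = hC k * aeval (Real.sqrt 2 * x) (hermite k)
  | 0, x => by simp [hermiteH, hC]
  | 1, x => by
      simp [hermiteH, hC, hermite_one]
      ring
  | (k + 2), x => by
      have hrec : aeval (Real.sqrt 2 * x) (hermite (k + 2))
          = (Real.sqrt 2 * x) * aeval (Real.sqrt 2 * x) (hermite (k + 1))
            - ((k : ℝ) + 1) * aeval (Real.sqrt 2 * x) (hermite k) := by
        rw [hermite_succ_succ]
        simp [nsmul_eq_mul]
      rw [hermiteH, hermiteH_eq (k + 1) x, hermiteH_eq k x, hrec]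
      linear_combination (x * aeval (Real.sqrt 2 * x) (hermite (k + 1))) * coef1 k
        - aeval (Real.sqrt 2 * x) (hermite k) * coef2 k

end HermiteAux

open HermiteAux Polynomial Real Nat in
/-- The Hermite functions `ψ_k` form an orthonormal system in `L²(ℝ)` with respect to
Lebesgue measure: `∫ ψ_j ψ_k dx = δ_{jk}`. -/
theorem stmt15 (j k : ℕ) :
    ∫ x : ℝ, hermitePsi j x * hermitePsi k x = if j = k then 1 else 0 := by
  have hpt : ∀ x : ℝ, hermitePsi j x * hermitePsi k x
      = (hC j * hC k) * (aeval (Real.sqrt 2 * x) (hermite j)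
          * aeval (Real.sqrt 2 * x) (hermite k) * gau (Real.sqrt 2 * x)) := by
    intro x
    have hexp : Real.exp (-x ^ 2 / 2) * Real.exp (-x ^ 2 / 2) = gau (Real.sqrt 2 * x) := by
      rw [gau, ← Real.exp_add]
      congr 1
      rw [mul_pow, Real.sq_sqrt (by norm_num : (0:ℝ) ≤ 2)]
      ring
    rw [hermitePsi, hermitePsi, hermiteH_eq, hermiteH_eq, ← hexp]
    ring
  simp_rw [hpt]
  rw [integral_const_mul]
  rw [show (∫ x : ℝ, aeval (Real.sqrt 2 * x) (hermite j)
        * aeval (Real.sqrt 2 * x) (hermite k) * gau (Real.sqrt 2 * x))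
      = |(Real.sqrt 2)⁻¹| • ∫ y : ℝ, aeval y (hermite j) * aeval y (hermite k) * gau y from by
      exact MeasureTheory.Measure.integral_comp_mul_left
        (fun u : ℝ => aeval u (hermite j) * aeval u (hermite k) * gau u) (Real.sqrt 2)]
  rw [ortho j k, smul_eq_mul]
  by_cases h : j = k
  · subst h
    rw [if_pos rfl, if_pos rfl]
    have hk : (j ! : ℝ) ≠ 0 := Nat.cast_ne_zero.mpr (Nat.factorial_ne_zero j)
    have hs2 : Real.sqrt 2 ≠ 0 := by positivity
    have e1 : hC j * hC j = π ^ (-(1:ℝ)/2) * ((j ! : ℝ))⁻¹ := by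
      rw [hC, show Real.pi ^ (-(1:ℝ)/4) * (Real.sqrt (j !))⁻¹
            * (Real.pi ^ (-(1:ℝ)/4) * (Real.sqrt (j !))⁻¹)
          = (Real.pi ^ (-(1:ℝ)/4) * Real.pi ^ (-(1:ℝ)/4))
            * ((Real.sqrt (j !))⁻¹ * (Real.sqrt (j !))⁻¹) from by ring,
        ← Real.rpow_add pi_pos, ← mul_inv, Real.mul_self_sqrt (by positivity)]
      norm_num
    have e2 : π ^ (-(1:ℝ)/2) * Real.sqrt π = 1 := by
      rw [Real.sqrt_eq_rpow, ← Real.rpow_add pi_pos]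
      norm_num
    have e3 : Real.sqrt (2 * π) = Real.sqrt 2 * Real.sqrt π :=
      Real.sqrt_mul (by norm_num) _
    rw [e1, abs_of_pos (by positivity), e3,
      show π ^ (-(1:ℝ)/2) * ((j ! : ℝ))⁻¹ * ((Real.sqrt 2)⁻¹
          * ((j ! : ℝ) * (Real.sqrt 2 * Real.sqrt π)))
        = (π ^ (-(1:ℝ)/2) * Real.sqrt π) * (((j ! : ℝ))⁻¹ * (j ! : ℝ))
          * ((Real.sqrt 2)⁻¹ * Real.sqrt 2) from by ring,
      e2, inv_mul_cancel₀ hk, inv_mul_cancel₀ hs2]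
    norm_num
  · rw [if_neg h, if_neg h]
    ring
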